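/- Let $G$ be a finite group, $F(G)$ its Fitting subgroup, and suppose $P$ is a subgroup of $G$ such that $P F(G)$ is normal in $G$, the derived subgroup $P'$ is contained in the center of $F(G)$, and $P$ is a Sylow $p$-subgroup of $PF(G)$. Then $P'$ is a normal subgroup of $G$. -/

import Mathlib

open Pointwise

/-- The Fitting subgroup of a group: the join of all normal nilpotent subgroups.
For a finite group this is the maximal normal nilpotent subgroup. -/
def FittingSubgroup (G : Type*) [Group G] : Subgroup G :=
  ⨆ (N : Subgroup G) (_ : N.Normal) (_ : Group.IsNilpotent ↥N), N

lemma FittingSubgroup.normal (G : Type*) [Group G] : (FittingSubgroup G).Normal := by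
  constructor
  intro n hn g
  refine Subgroup.iSup_induction
    (C := fun x => g * x * g⁻¹ ∈ FittingSubgroup G) _ hn ?_ ?_ ?_
  · intro N x hx
    by_cases hN : N.Normal
    · by_cases hnil : Group.IsNilpotent ↥N
      · rw [iSup_pos hN, iSup_pos hnil] at hx
        have hmem : g * x * g⁻¹ ∈ N := hN.conj_mem x hx g
        have hle : N ≤ FittingSubgroup G :=
          le_iSup_of_le N (le_iSup_of_le hN (le_iSup_of_le hnil le_rfl))
        exact hle hmem
      · rw [iSup_pos hN, iSup_neg hnil, Subgroup.mem_bot] at hx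
        rw [hx, mul_one, mul_inv_cancel]
        exact one_mem _
    · rw [iSup_neg hN, Subgroup.mem_bot] at hx
      rw [hx, mul_one, mul_inv_cancel]
      exact one_mem _
  · show g * 1 * g⁻¹ ∈ FittingSubgroup G
    rw [mul_one, mul_inv_cancel]
    exact one_mem _
  · intro x y hx hy
    have h : g * (x * y) * g⁻¹ = (g * x * g⁻¹) * (g * y * g⁻¹) := by group
    rw [h]
    exact mul_mem hx hy

lemma map_subtype_conj_smul {G : Type*} [Group G] (H : Subgroup G) (x : ↥H)
    (K : Subgroup ↥H) :
    (MulAut.conj x • K).map H.subtype = MulAut.conj (x : G) • (K.map H.subtype) := by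
  ext y
  simp only [Subgroup.mem_map, Subgroup.mem_smul_pointwise_iff_exists, MulAut.smul_def,
    MulAut.conj_apply]
  constructor
  · rintro ⟨z, ⟨w, hw, rfl⟩, rfl⟩
    exact ⟨H.subtype w, ⟨w, hw, rfl⟩, by simp⟩
  · rintro ⟨z, ⟨w, hw, rfl⟩, rfl⟩
    exact ⟨x * w * x⁻¹, ⟨w, hw, rfl⟩, by simp⟩

lemma conj_smul_self {G : Type*} [Group G] {P : Subgroup G} {q : G} (hq : q ∈ P) :
    MulAut.conj q • P = P := by
  rw [Subgroup.pointwise_smul_def]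
  apply le_antisymm
  · rintro y ⟨z, hz, rfl⟩
    simpa [MulAut.conj_apply] using mul_mem (mul_mem hq hz) (inv_mem hq)
  · intro y hy
    exact ⟨q⁻¹ * y * q, by simpa [mul_assoc] using mul_mem (mul_mem (inv_mem hq) hy) hq,
      by simp [MulAut.conj_apply]; group⟩

/-- Let `G` be a finite group with Fitting subgroup `F(G)` and let `P ≤ G` be such that
`P·F(G)` is normal in `G`, the derived subgroup `P'` is contained in the center of
`F(G)` (i.e. `P' ≤ F(G)` and `P'` centralizes `F(G)`), and `P` is a Sylow `p`-subgroup
of `P·F(G)` (a `p`-subgroup of index prime to `p`).  Then `P'` is normal in `G`. -/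
theorem stmt16 {G : Type*} [Group G] [Finite G] (p : ℕ) (hp : p.Prime)
    (P : Subgroup G)
    (hPFnormal : (P ⊔ FittingSubgroup G).Normal)
    (hP'F : ⁅P, P⁆ ≤ FittingSubgroup G)
    (hP'central : (⁅P, P⁆ : Subgroup G) ≤ Subgroup.centralizer (FittingSubgroup G : Set G))
    (hPp : IsPGroup p ↥P)
    (hPsylow : ¬ p ∣ (P.subgroupOf (P ⊔ FittingSubgroup G)).index) :
    (⁅P, P⁆ : Subgroup G).Normal := by
  haveI := Fact.mk hp
  haveI hFnorm : (FittingSubgroup G).Normal := FittingSubgroup.normal G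
  set F := FittingSubgroup G with hFdef
  set H := P ⊔ F with hHdef
  haveI : H.Normal := hPFnormal
  have hPH : P ≤ H := le_sup_left
  have hPsub : IsPGroup p ↥(P.subgroupOf H) :=
    hPp.comap_of_injective H.subtype Subtype.coe_injective
  let S : Sylow p ↥H := hPsub.toSylow hPsylow
  have key : ∀ g : G, MulAut.conj g • (⁅P, P⁆ : Subgroup G) = ⁅P, P⁆ := by
    intro g
    set Q : Subgroup G := MulAut.conj g • P with hQdef
    have hQH : Q ≤ H := by
      have h1 : Q ≤ MulAut.conj g • H := by
        rw [hQdef, Subgroup.pointwise_smul_def, Subgroup.pointwise_smul_def]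
        exact Subgroup.map_mono hPH
      rwa [Subgroup.Normal.conj_smul_eq_self] at h1
    have hQp : IsPGroup p ↥Q := by
      rw [hQdef, Subgroup.pointwise_smul_def]
      exact hPp.map _
    have hQsub : IsPGroup p ↥(Q.subgroupOf H) :=
      hQp.comap_of_injective H.subtype Subtype.coe_injective
    have hcardPQ : Nat.card ↥Q = Nat.card ↥P := by
      rw [hQdef, Subgroup.pointwise_smul_def]
      exact (Nat.card_congr
        (P.equivMapOfInjective _ (MulAut.conj g).injective).toEquiv).symm
    have hcardP : Nat.card ↥(P.subgroupOf H) = Nat.card ↥P :=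
      Nat.card_congr (Subgroup.subgroupOfEquivOfLe hPH).toEquiv
    have hcardQ : Nat.card ↥(Q.subgroupOf H) = Nat.card ↥Q :=
      Nat.card_congr (Subgroup.subgroupOfEquivOfLe hQH).toEquiv
    have hidx : (Q.subgroupOf H).index = (P.subgroupOf H).index := by
      have h1 := Subgroup.card_mul_index (Q.subgroupOf H)
      have h2 := Subgroup.card_mul_index (P.subgroupOf H)
      have hc : Nat.card ↥(Q.subgroupOf H) = Nat.card ↥(P.subgroupOf H) := by
        rw [hcardQ, hcardPQ, hcardP]
      have hpos : 0 < Nat.card ↥(P.subgroupOf H) := Nat.card_pos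
      rw [hc] at h1
      exact Nat.eq_of_mul_eq_mul_left hpos (h1.trans h2.symm)
    have hQsyl : ¬ p ∣ (Q.subgroupOf H).index := hidx ▸ hPsylow
    let S' : Sylow p ↥H := hQsub.toSylow hQsyl
    obtain ⟨x, hx⟩ := MulAction.exists_smul_eq ↥H S' S
    have hx' : MulAut.conj x • (Q.subgroupOf H) = P.subgroupOf H := by
      have h := congrArg (fun T : Sylow p ↥H => (T : Subgroup ↥H)) hx
      simpa [S, S', Sylow.smul_def, Sylow.pointwise_smul_def] using h
    have hmain : MulAut.conj (x : G) • Q = P := by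
      have h := congrArg (Subgroup.map H.subtype) hx'
      rw [map_subtype_conj_smul, Subgroup.subgroupOf_map_subtype,
        Subgroup.subgroupOf_map_subtype, inf_of_le_left hQH, inf_of_le_left hPH] at h
      exact h
    have hx2 : MulAut.conj g • P = MulAut.conj ((x : G)⁻¹) • P := by
      rw [map_inv, eq_inv_smul_iff]
      exact hmain
    have hxH : ((x : G)⁻¹) ∈ H := inv_mem x.2
    have hxH' : ((x : G)⁻¹) ∈ (↑P * ↑F : Set G) := by
      rw [← Subgroup.mul_normal P F]
      exact hxH
    obtain ⟨q, hq, f, hf, hqf⟩ := Set.mem_mul.mp hxH'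
    have hfK : MulAut.conj f • (⁅P, P⁆ : Subgroup G) = ⁅P, P⁆ := by
      rw [Subgroup.pointwise_smul_def]
      apply le_antisymm
      · rintro y ⟨k, hk, rfl⟩
        have hcomm : f * k = k * f := Subgroup.mem_centralizer_iff.mp (hP'central hk) f hf
        have hck : f * k * f⁻¹ = k := by
          rw [hcomm, mul_assoc, mul_inv_cancel, mul_one]
        show f * k * f⁻¹ ∈ (⁅P, P⁆ : Subgroup G)
        rw [hck]
        exact hk
      · intro k hk
        have hcomm : f * k = k * f := Subgroup.mem_centralizer_iff.mp (hP'central hk) f hf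
        refine ⟨k, hk, ?_⟩
        show f * k * f⁻¹ = k
        rw [hcomm, mul_assoc, mul_inv_cancel, mul_one]
    calc MulAut.conj g • (⁅P, P⁆ : Subgroup G)
        = MulAut.conj g • ⁅P, P⁆ := rfl
      _ = ⁅MulAut.conj g • P, MulAut.conj g • P⁆ := by
          simp only [Subgroup.pointwise_smul_def]
          exact Subgroup.map_commutator _ _ _
      _ = ⁅MulAut.conj ((x:G)⁻¹) • P, MulAut.conj ((x:G)⁻¹) • P⁆ := by rw [hx2]
      _ = MulAut.conj ((x:G)⁻¹) • ⁅P, P⁆ := by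
          simp only [Subgroup.pointwise_smul_def]
          exact (Subgroup.map_commutator _ _ _).symm
      _ = MulAut.conj (q * f) • ⁅P, P⁆ := by rw [hqf]
      _ = MulAut.conj q • (MulAut.conj f • ⁅P, P⁆) := by rw [map_mul, mul_smul]
      _ = MulAut.conj q • ⁅P, P⁆ := by rw [hfK]
      _ = ⁅MulAut.conj q • P, MulAut.conj q • P⁆ := by
          simp only [Subgroup.pointwise_smul_def]
          exact Subgroup.map_commutator _ _ _
      _ = ⁅P, P⁆ := by rw [conj_smul_self hq]
  constructor
  intro n hn g
  have h := key g
  rw [Subgroup.pointwise_smul_def] at h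
  rw [← h]
  exact ⟨n, hn, rfl⟩
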